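/- Let 0 < α < β and let ε ∈ (0,1). Then the function ψ(x) = (ε^{xβ+1}+1)^{1/β} / (ε^{xα+1}+1)^{1/α} is strictly increasing on [0,∞) and strictly decreasing on (−∞,0]. -/

import Mathlib

open Set

/-- For fixed `0 < α < β` and `ε ∈ (0,1)`, the function
`ψ(x) = (ε^{xβ+1}+1)^{1/β} / (ε^{xα+1}+1)^{1/α}`
is strictly increasing on `[0,∞)` and strictly decreasing on `(-∞,0]`. -/
theorem psi_strictMonoOn_and_strictAntiOn
    (α β ε : ℝ) (hα : 0 < α) (hαβ : α < β) (hε₀ : 0 < ε) (hε₁ : ε < 1) :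
    StrictMonoOn
        (fun x : ℝ => (ε ^ (x * β + 1) + 1) ^ (1 / β) / (ε ^ (x * α + 1) + 1) ^ (1 / α))
        (Ici 0) ∧
      StrictAntiOn
        (fun x : ℝ => (ε ^ (x * β + 1) + 1) ^ (1 / β) / (ε ^ (x * α + 1) + 1) ^ (1 / α))
        (Iic 0) := by
  have hβ : 0 < β := hα.trans hαβ
  have hlogε : Real.log ε < 0 := Real.log_neg hε₀ hε₁
  set L : ℝ → ℝ := fun x =>
    Real.log (ε ^ (x * β + 1) + 1) * (1 / β) - Real.log (ε ^ (x * α + 1) + 1) * (1 / α) with hLdef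
  have hApos : ∀ (x p : ℝ), 0 < ε ^ (x * p + 1) + 1 := fun x p => by positivity
  have hψ : (fun x : ℝ => (ε ^ (x * β + 1) + 1) ^ (1 / β) / (ε ^ (x * α + 1) + 1) ^ (1 / α))
      = fun x => Real.exp (L x) := by
    funext x
    rw [hLdef, Real.rpow_def_of_pos (hApos x β), Real.rpow_def_of_pos (hApos x α),
      ← Real.exp_sub]
  have hLd : ∀ x : ℝ, HasDerivAt L
      (Real.log ε * (ε ^ (x * β + 1) / (ε ^ (x * β + 1) + 1)
        - ε ^ (x * α + 1) / (ε ^ (x * α + 1) + 1))) x := by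
    intro x
    have key : ∀ p : ℝ, 0 < p → HasDerivAt
        (fun x : ℝ => Real.log (ε ^ (x * p + 1) + 1) * (1 / p))
        (Real.log ε * (ε ^ (x * p + 1) / (ε ^ (x * p + 1) + 1))) x := by
      intro p hp
      have h1 : HasDerivAt (fun x : ℝ => x * p + 1) p x := by
        simpa using ((hasDerivAt_id x).mul_const p).add_const 1
      have hb : HasDerivAt (fun x : ℝ => ε ^ (x * p + 1))
          ((ε ^ (x * p + 1) * Real.log ε) * p) x :=
        ((Real.hasStrictDerivAt_const_rpow hε₀ (x * p + 1)).hasDerivAt).comp x h1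
      have hb1 : HasDerivAt (fun x : ℝ => ε ^ (x * p + 1) + 1)
          ((ε ^ (x * p + 1) * Real.log ε) * p) x := hb.add_const 1
      have hlog := (hb1.log (hApos x p).ne').mul_const (1 / p)
      refine hlog.congr_deriv ?_
      field_simp
    rw [hLdef, mul_sub]
    exact (key β hβ).sub (key α hα)
  have hψd : ∀ x : ℝ, HasDerivAt
      (fun x : ℝ => (ε ^ (x * β + 1) + 1) ^ (1 / β) / (ε ^ (x * α + 1) + 1) ^ (1 / α))
      (Real.exp (L x) * (Real.log ε * (ε ^ (x * β + 1) / (ε ^ (x * β + 1) + 1)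
        - ε ^ (x * α + 1) / (ε ^ (x * α + 1) + 1)))) x := by
    intro x
    rw [hψ]
    exact (Real.hasDerivAt_exp (L x)).comp x (hLd x)
  have hcont : Continuous
      (fun x : ℝ => (ε ^ (x * β + 1) + 1) ^ (1 / β) / (ε ^ (x * α + 1) + 1) ^ (1 / α)) :=
    continuous_iff_continuousAt.2 fun x => (hψd x).differentiableAt.continuousAt
  -- strict fraction monotonicity: a < b → a/(a+1) < b/(b+1) for 0 < a
  have frac_lt : ∀ a b : ℝ, 0 < a → 0 < b → a < b → a / (a + 1) < b / (b + 1) := by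
    intro a b ha hb hab
    rw [div_lt_div_iff₀ (by linarith) (by linarith)]
    nlinarith
  constructor
  · apply strictMonoOn_of_deriv_pos (convex_Ici 0) hcont.continuousOn
    intro x hx
    rw [interior_Ici] at hx
    rw [(hψd x).deriv]
    have hexp : ε ^ (x * β + 1) < ε ^ (x * α + 1) :=
      Real.rpow_lt_rpow_of_exponent_gt hε₀ hε₁ (by nlinarith [mem_Ioi.mp hx])
    have h1 : ε ^ (x * β + 1) / (ε ^ (x * β + 1) + 1)
        < ε ^ (x * α + 1) / (ε ^ (x * α + 1) + 1) :=
      frac_lt _ _ (Real.rpow_pos_of_pos hε₀ _) (Real.rpow_pos_of_pos hε₀ _) hexp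
    have := mul_pos_of_neg_of_neg hlogε (by linarith : ε ^ (x * β + 1) / (ε ^ (x * β + 1) + 1)
        - ε ^ (x * α + 1) / (ε ^ (x * α + 1) + 1) < 0)
    positivity
  · apply strictAntiOn_of_deriv_neg (convex_Iic 0) hcont.continuousOn
    intro x hx
    rw [interior_Iic] at hx
    rw [(hψd x).deriv]
    have hexp : ε ^ (x * α + 1) < ε ^ (x * β + 1) :=
      Real.rpow_lt_rpow_of_exponent_gt hε₀ hε₁ (by nlinarith [mem_Iio.mp hx])
    have h1 : ε ^ (x * α + 1) / (ε ^ (x * α + 1) + 1)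
        < ε ^ (x * β + 1) / (ε ^ (x * β + 1) + 1) :=
      frac_lt _ _ (Real.rpow_pos_of_pos hε₀ _) (Real.rpow_pos_of_pos hε₀ _) hexp
    have hneg := mul_neg_of_neg_of_pos hlogε
      (by linarith : 0 < ε ^ (x * β + 1) / (ε ^ (x * β + 1) + 1)
        - ε ^ (x * α + 1) / (ε ^ (x * α + 1) + 1))
    have hepos : 0 < Real.exp (L x) := Real.exp_pos _
    nlinarith
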